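/- If α ≤ 1/2 and n ≥ 1, then the median of the values μ_1,...,μ_n lies inside the jackknife+ interval [q⁻_{n,α}{μ_i - R_i}, q⁺_{n,α}{μ_i + R_i}] for any nonnegative R_1,...,R_n, where q⁺_{n,α}{v_i} is the ⌈(1-α)(n+1)⌉-th smallest of v_1,...,v_n and q⁻_{n,α}{v_i} is the ⌊α(n+1)⌋-th smallest (with the conventions q⁺ = +∞ if ⌈(1-α)(n+1)⌉ > n and q⁻ = -∞ if ⌊α(n+1)⌋ < 1). -/

import Mathlib

private lemma jk_len_filter_eq_sum {α : Type*} (q : α → Bool) : ∀ (l : List α),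
    (l.filter q).length = (l.map fun a => if q a then 1 else 0).sum := by
  intro l; induction l with
  | nil => simp
  | cons a t ih => by_cases h : q a <;> simp [List.filter_cons, h, ih, Nat.add_comm]

private lemma jk_countP_ofFn_eq_card {n : ℕ} (v : Fin n → ℝ) (p : ℝ → Prop) [DecidablePred p] :
    (List.ofFn v).countP (fun x => decide (p x)) = (Finset.univ.filter fun i => p (v i)).card := by
  rw [List.ofFn_eq_map, List.countP_map, List.countP_eq_length_filter]
  rw [Finset.card_filter]
  rw [show (Finset.univ : Finset (Fin n)).sum (fun i => if p (v i) then 1 else 0)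
      = ((List.finRange n : Multiset (Fin n)).map (fun i => if p (v i) then 1 else 0)).sum from rfl]
  rw [jk_len_filter_eq_sum]
  simp [Function.comp]

private lemma jk_aux1 {m : ℝ} : ∀ (s : List ℝ), s.Pairwise (· ≤ ·) → ∀ k, k < s.length →
    k + 1 ≤ s.countP (fun x => decide (x ≤ m)) → s.getD k 0 ≤ m := by
  intro s
  induction s with
  | nil => simp
  | cons a t ih =>
    intro hs k hk hc
    rw [List.pairwise_cons] at hs
    match k with
    | 0 =>
      simp only [List.getD_cons_zero]
      by_contra h
      push_neg at h
      have h0 : (a :: t).countP (fun x => decide (x ≤ m)) = 0 := by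
        rw [List.countP_eq_zero]
        intro x hx
        simp only [decide_eq_true_eq, not_le]
        rcases List.mem_cons.mp hx with rfl | hx
        · exact h
        · exact lt_of_lt_of_le h (hs.1 x hx)
      omega
    | k + 1 =>
      simp only [List.getD_cons_succ]
      apply ih hs.2 k (by simpa using hk)
      rw [List.countP_cons] at hc
      by_cases hpa : a ≤ m <;> simp [hpa] at hc <;> omega

private lemma jk_aux2 {m : ℝ} : ∀ (s : List ℝ), s.Pairwise (· ≤ ·) → ∀ k, k < s.length →
    s.length - k ≤ s.countP (fun x => decide (m ≤ x)) → m ≤ s.getD k 0 := by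
  intro s
  induction s with
  | nil => simp
  | cons a t ih =>
    intro hs k hk hc
    rw [List.pairwise_cons] at hs
    match k with
    | 0 =>
      simp only [List.getD_cons_zero]
      have hle := List.countP_le_length (l := a :: t) (p := fun x => decide (m ≤ x))
      have hall : (a :: t).countP (fun x => decide (m ≤ x)) = (a :: t).length := by
        simp only [List.length_cons] at hc hle ⊢
        omega
      rw [List.countP_eq_length] at hall
      simpa using hall a (List.mem_cons_self (a := a) (l := t))
    | k + 1 =>
      simp only [List.getD_cons_succ]
      apply ih hs.2 k (by simpa using hk)
      by_cases hma : m ≤ a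
      · have hct : t.countP (fun x => decide (m ≤ x)) = t.length := by
          rw [List.countP_eq_length]
          intro x hx
          simpa using le_trans hma (hs.1 x hx)
        omega
      · rw [List.countP_cons] at hc
        simp only [List.length_cons, hma, decide_eq_true_eq, if_neg] at hc ⊢
        simp [hma] at hc
        omega

/-- The `k`-th smallest of `v 0, ..., v (n-1)` (1-indexed). -/
noncomputable def kth {n : ℕ} (v : Fin n → ℝ) (k : ℕ) : ℝ :=
  (((List.ofFn v) : Multiset ℝ).sort (· ≤ ·)).getD (k - 1) 0

private lemma jk_sort_facts {n : ℕ} (v : Fin n → ℝ) (p : ℝ → Prop) [DecidablePred p] :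
    ((((List.ofFn v) : Multiset ℝ).sort (· ≤ ·)).length = n) ∧
    ((((List.ofFn v) : Multiset ℝ).sort (· ≤ ·)).countP (fun x => decide (p x))
      = (Finset.univ.filter fun i => p (v i)).card) := by
  constructor
  · rw [Multiset.length_sort]
    simp
  · rw [← jk_countP_ofFn_eq_card v p]
    have h := Multiset.sort_eq (α := ℝ) ((List.ofFn v : Multiset ℝ)) (· ≤ ·)
    calc (((List.ofFn v) : Multiset ℝ).sort (· ≤ ·)).countP (fun x => decide (p x))
        = Multiset.countP p ((((List.ofFn v) : Multiset ℝ).sort (· ≤ ·)) : Multiset ℝ) := by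
          rw [Multiset.coe_countP]
      _ = Multiset.countP p ((List.ofFn v) : Multiset ℝ) := by rw [h]
      _ = (List.ofFn v).countP (fun x => decide (p x)) := by rw [Multiset.coe_countP]

private lemma jk_kth_le {n k : ℕ} (hk1 : 1 ≤ k) (hkn : k ≤ n) (v : Fin n → ℝ) (m : ℝ)
    (h : k ≤ (Finset.univ.filter fun i => v i ≤ m).card) : kth v k ≤ m := by
  obtain ⟨hlen, hcnt⟩ := jk_sort_facts v (fun x => x ≤ m)
  apply jk_aux1 _ (Multiset.pairwise_sort _ _) (k - 1) (by omega)
  rw [hcnt]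
  omega

private lemma jk_le_kth {n k : ℕ} (hk1 : 1 ≤ k) (hkn : k ≤ n) (v : Fin n → ℝ) (m : ℝ)
    (h : n - k + 1 ≤ (Finset.univ.filter fun i => m ≤ v i).card) : m ≤ kth v k := by
  obtain ⟨hlen, hcnt⟩ := jk_sort_facts v (fun x => m ≤ x)
  apply jk_aux2 _ (Multiset.pairwise_sort _ _) (k - 1) (by omega)
  rw [hcnt, hlen]
  omega

/-- Upper quantile with the convention `q⁺ = +∞` if `⌈(1-α)(n+1)⌉ > n`. -/
noncomputable def qplusE {n : ℕ} (α : ℝ) (v : Fin n → ℝ) : EReal :=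
  if ⌈(1 - α) * (n + 1)⌉₊ ≤ n then ((kth v ⌈(1 - α) * (n + 1)⌉₊ : ℝ) : EReal) else ⊤

/-- Lower quantile with the convention `q⁻ = -∞` if `⌊α(n+1)⌋ < 1`. -/
noncomputable def qminusE {n : ℕ} (α : ℝ) (v : Fin n → ℝ) : EReal :=
  if 1 ≤ ⌊α * (n + 1)⌋₊ then ((kth v ⌊α * (n + 1)⌋₊ : ℝ) : EReal) else ⊥

/-- for `α ≤ 1/2`, any median `m` of `μ_1,…,μ_n` (a value with
at least `⌈n/2⌉` of the `μ_i` on each side) lies in the jackknife+ interval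
`[q⁻{μ_i - R_i}, q⁺{μ_i + R_i}]` for any nonnegative `R_i`. -/
theorem median_mem_jackknife_plus (n : ℕ) (hn : 1 ≤ n) (α : ℝ)
    (hα0 : 0 ≤ α) (hα : α ≤ 1 / 2)
    (μ : Fin n → ℝ) (R : Fin n → ℝ) (hR : ∀ i, 0 ≤ R i) (m : ℝ)
    (hml : (⌈(n : ℝ) / 2⌉₊ : ℝ) ≤ (Finset.univ.filter fun i => μ i ≤ m).card)
    (hmr : (⌈(n : ℝ) / 2⌉₊ : ℝ) ≤ (Finset.univ.filter fun i => m ≤ μ i).card) :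
    qminusE α (fun i => μ i - R i) ≤ (m : EReal) ∧
      (m : EReal) ≤ qplusE α (fun i => μ i + R i) := by
  set c := ⌈(n : ℝ) / 2⌉₊ with hc
  have hcn : c ≤ n := by
    apply Nat.ceil_le.mpr
    have : (0:ℝ) ≤ n := Nat.cast_nonneg n
    linarith
  have hcge : ((n : ℝ) / 2) ≤ (c : ℝ) := Nat.le_ceil _
  -- nat versions of the count hypotheses
  have hmlN : c ≤ (Finset.univ.filter fun i => μ i ≤ m).card := by exact_mod_cast hml
  have hmrN : c ≤ (Finset.univ.filter fun i => m ≤ μ i).card := by exact_mod_cast hmr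
  constructor
  · -- lower bound
    rw [qminusE]
    by_cases hk : 1 ≤ ⌊α * (n + 1)⌋₊
    · rw [if_pos hk]
      rw [EReal.coe_le_coe_iff]
      set k := ⌊α * (n + 1)⌋₊ with hkdef
      have hkr : (k : ℝ) ≤ α * (n + 1) := Nat.floor_le (by positivity)
      have hkc : k ≤ c := by
        have h1 : α * (n + 1) ≤ ((n:ℝ) + 1) / 2 := by nlinarith [Nat.cast_nonneg (α := ℝ) n]
        have h2 : (k : ℝ) < (c : ℝ) + 1 := by linarith
        exact_mod_cast Nat.lt_add_one_iff.mp (by exact_mod_cast h2)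
      apply jk_kth_le hk (le_trans hkc hcn)
      have hsub : (Finset.univ.filter fun i => μ i ≤ m)
          ⊆ (Finset.univ.filter fun i => μ i - R i ≤ m) := by
        intro i hi
        simp only [Finset.mem_filter, Finset.mem_univ, true_and] at hi ⊢
        have := hR i
        linarith
      have := Finset.card_le_card hsub
      omega
    · rw [if_neg hk]
      exact bot_le
  · -- upper bound
    rw [qplusE]
    by_cases hk : ⌈(1 - α) * (n + 1)⌉₊ ≤ n
    · rw [if_pos hk]
      rw [EReal.coe_le_coe_iff]
      set k := ⌈(1 - α) * (n + 1)⌉₊ with hkdef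
      have hkr : (1 - α) * ((n:ℝ) + 1) ≤ (k : ℝ) := Nat.le_ceil _
      have hk1 : 1 ≤ k := by
        rw [hkdef]
        apply Nat.one_le_iff_ne_zero.mpr
        apply Nat.pos_iff_ne_zero.mp
        apply Nat.ceil_pos.mpr
        have : (0:ℝ) ≤ n := Nat.cast_nonneg n
        nlinarith
      apply jk_le_kth hk1 hk
      have hnk : (n : ℕ) - k + 1 ≤ c := by
        have hcast : ((n - k : ℕ) : ℝ) = (n : ℝ) - (k : ℝ) := by
          rw [Nat.cast_sub hk]
        have h1 : ((n:ℝ) + 1) / 2 ≤ (k : ℝ) := by nlinarith [Nat.cast_nonneg (α := ℝ) n]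
        have h2 : ((n - k : ℕ) : ℝ) + 1 < (c : ℝ) + 1 := by
          rw [hcast]; linarith
        have h3 : (n - k : ℕ) + 1 < c + 1 := by exact_mod_cast h2
        omega
      have hsub : (Finset.univ.filter fun i => m ≤ μ i)
          ⊆ (Finset.univ.filter fun i => m ≤ μ i + R i) := by
        intro i hi
        simp only [Finset.mem_filter, Finset.mem_univ, true_and] at hi ⊢
        have := hR i
        linarith
      have := Finset.card_le_card hsub
      omega
    · rw [if_neg hk]
      exact le_top
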